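/- Let μ be a Borel measure on (0,∞) with ∫_{(0,∞)} min(x, x²) μ(dx) < ∞, γ ≥ 0, and ψ₀(θ) = γ²θ² + ∫_{(0,∞)} (e^{−θx} − 1 + θx) μ(dx). Let t > 0, λ > 0, and let K, K̃ : [0,t] → ℝ be continuous. Let v, ṽ : [0,t] → [0,λ] be differentiable with v(t) = ṽ(t) = λ, v'(s) = e^{K(s)} ψ₀(v(s) e^{−K(s)}) and ṽ'(s) = e^{K̃(s)} ψ₀(ṽ(s) e^{−K̃(s)}) for all s ∈ [0,t]. Set S = max_{s∈[0,t]} max(e^{K(s)}, e^{−K(s)}, e^{K̃(s)}, e^{−K̃(s)}), C = ψ₀'(λS), and δ = max_{s∈[0,t]} max(|e^{K(s)} − e^{K̃(s)}|, |e^{−K(s)} − e^{−K̃(s)}|). Then for every s ∈ [0,t], |v(s) − ṽ(s)| ≤ t (SCλ + S ψ₀(Sλ)) δ e^{Ct}. -/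

import Mathlib

open Real MeasureTheory Set

lemma stmt9_F_nonneg {u : ℝ} (hu : 0 ≤ u) : 0 ≤ Real.exp (-u) - 1 + u := by
  nlinarith [Real.add_one_le_exp (-u)]

lemma stmt9_exp_neg_le_one {u : ℝ} (hu : 0 ≤ u) : Real.exp (-u) ≤ 1 :=
  Real.exp_le_one_iff.mpr (neg_nonpos.mpr hu)

lemma stmt9_F_le_lin {u : ℝ} (hu : 0 ≤ u) : Real.exp (-u) - 1 + u ≤ u := by
  nlinarith [stmt9_exp_neg_le_one hu]

lemma stmt9_F_le_sq {u : ℝ} (hu : 0 ≤ u) : Real.exp (-u) - 1 + u ≤ u ^ 2 := by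
  have h1 : (0:ℝ) < 1 + u := by linarith
  have h2 : Real.exp (-u) ≤ (1 + u)⁻¹ := by
    rw [Real.exp_neg]
    exact inv_anti₀ h1 (by nlinarith [Real.add_one_le_exp u])
  have h3 : (1 + u) * (1 + u)⁻¹ = 1 := mul_inv_cancel₀ h1.ne'
  nlinarith [mul_nonneg (mul_nonneg hu hu) hu]

lemma stmt9_one_sub_exp_neg_le {u : ℝ} (hu : 0 ≤ u) : 1 - Real.exp (-u) ≤ u := by
  nlinarith [Real.add_one_le_exp (-u)]

lemma stmt9_F_mono_pt {a b x : ℝ} (ha : 0 ≤ a) (hab : a ≤ b) (hx : 0 ≤ x) :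
    Real.exp (-a * x) - 1 + a * x ≤ Real.exp (-b * x) - 1 + b * x := by
  have hE : Real.exp (-b * x) = Real.exp (-(a * x)) * Real.exp (-((b - a) * x)) := by
    rw [← Real.exp_add]; ring_nf
  have h1 : Real.exp (-(a * x)) ≤ 1 := stmt9_exp_neg_le_one (mul_nonneg ha hx)
  have h2 : 1 - Real.exp (-((b - a) * x)) ≤ (b - a) * x :=
    stmt9_one_sub_exp_neg_le (mul_nonneg (by linarith) hx)
  have h3 : 0 ≤ Real.exp (-((b - a) * x)) := (Real.exp_pos _).le
  have h4 : Real.exp (-((b - a) * x)) ≤ 1 :=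
    stmt9_exp_neg_le_one (mul_nonneg (by linarith) hx)
  have h5 : (0:ℝ) ≤ Real.exp (-(a * x)) := (Real.exp_pos _).le
  have hax : Real.exp (-a * x) = Real.exp (-(a * x)) := by ring_nf
  nlinarith [mul_le_mul_of_nonneg_right h1 (by linarith : (0:ℝ) ≤ 1 - Real.exp (-((b - a) * x)))]

lemma stmt9_F_convex_pt {a b p q x : ℝ} (hp : 0 ≤ p) (hq : 0 ≤ q) (hpq : p + q = 1) :
    Real.exp (-(p * a + q * b) * x) - 1 + (p * a + q * b) * x ≤
      p * (Real.exp (-a * x) - 1 + a * x) + q * (Real.exp (-b * x) - 1 + b * x) := by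
  have h := convexOn_exp.2 (Set.mem_univ (-a * x)) (Set.mem_univ (-b * x)) hp hq hpq
  simp only [smul_eq_mul] at h
  have he : -(p * a + q * b) * x = p * (-a * x) + q * (-b * x) := by ring
  rw [he]
  nlinarith [h]

lemma stmt9_cont (θ : ℝ) : Continuous fun x : ℝ => Real.exp (-θ * x) - 1 + θ * x := by
  fun_prop

lemma stmt9_integrable {μ : Measure ℝ}
    (hμ : IntegrableOn (fun x => min x (x ^ 2)) (Set.Ioi 0) μ)
    {θ : ℝ} (hθ : 0 ≤ θ) :
    Integrable (fun x => Real.exp (-θ * x) - 1 + θ * x) (μ.restrict (Set.Ioi 0)) := by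
  refine (hμ.const_mul (max θ (θ ^ 2))).mono' ((stmt9_cont θ).aestronglyMeasurable) ?_
  filter_upwards [ae_restrict_mem measurableSet_Ioi] with x hx
  have hx0 : (0:ℝ) < x := hx
  have h0 : 0 ≤ θ * x := mul_nonneg hθ hx0.le
  have hax : -θ * x = -(θ * x) := by ring
  rw [Real.norm_eq_abs, abs_of_nonneg (by rw [hax]; exact stmt9_F_nonneg h0), hax]
  rcases le_total x 1 with h | h
  · have hmin : min x (x ^ 2) = x ^ 2 := min_eq_right (by nlinarith)
    rw [hmin]
    have := stmt9_F_le_sq h0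
    have hm : θ ^ 2 ≤ max θ (θ ^ 2) := le_max_right _ _
    nlinarith [sq_nonneg x, sq_nonneg θ]
  · have hmin : min x (x ^ 2) = x := min_eq_left (by nlinarith)
    rw [hmin]
    have := stmt9_F_le_lin h0
    have hm : θ ≤ max θ (θ ^ 2) := le_max_left _ _
    nlinarith

section psi
variable {μ : Measure ℝ} {γ : ℝ} {ψ₀ : ℝ → ℝ}
  (hμ : IntegrableOn (fun x => min x (x ^ 2)) (Set.Ioi 0) μ)
  (hψ : ∀ θ, ψ₀ θ = γ ^ 2 * θ ^ 2 +
      ∫ x in Set.Ioi (0:ℝ), (Real.exp (-θ * x) - 1 + θ * x) ∂μ)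

include hμ hψ

lemma stmt9_convex : ConvexOn ℝ (Set.Ici 0) ψ₀ := by
  refine ⟨convex_Ici 0, fun a ha b hb p q hp hq hpq => ?_⟩
  simp only [smul_eq_mul, hψ]
  have ha0 : (0:ℝ) ≤ a := ha
  have hb0 : (0:ℝ) ≤ b := hb
  have hint : (∫ x in Set.Ioi (0:ℝ), (Real.exp (-(p * a + q * b) * x) - 1 + (p * a + q * b) * x) ∂μ)
      ≤ ∫ x in Set.Ioi (0:ℝ),
        (p * (Real.exp (-a * x) - 1 + a * x) + q * (Real.exp (-b * x) - 1 + b * x)) ∂μ := by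
    refine integral_mono (stmt9_integrable hμ (by positivity)) ?_
      (fun x => stmt9_F_convex_pt hp hq hpq)
    exact ((stmt9_integrable hμ ha0).const_mul p).add ((stmt9_integrable hμ hb0).const_mul q)
  rw [integral_add ((stmt9_integrable hμ ha0).const_mul p)
      ((stmt9_integrable hμ hb0).const_mul q),
    integral_const_mul, integral_const_mul] at hint
  have hq' : q = 1 - p := by linarith
  subst hq'
  have key : γ ^ 2 * (p * a + (1 - p) * b) ^ 2 ≤ p * (γ ^ 2 * a ^ 2) + (1 - p) * (γ ^ 2 * b ^ 2) := by
    nlinarith [mul_nonneg (sq_nonneg γ) (mul_nonneg (mul_nonneg hp hq) (sq_nonneg (a - b)))]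
  linarith

lemma stmt9_mono : MonotoneOn ψ₀ (Set.Ici 0) := by
  intro a ha b hb hab
  have ha0 : (0:ℝ) ≤ a := ha
  rw [hψ a, hψ b]
  have hint : (∫ x in Set.Ioi (0:ℝ), (Real.exp (-a * x) - 1 + a * x) ∂μ)
      ≤ ∫ x in Set.Ioi (0:ℝ), (Real.exp (-b * x) - 1 + b * x) ∂μ := by
    refine integral_mono_ae (stmt9_integrable hμ ha0) (stmt9_integrable hμ (ha0.trans hab)) ?_
    filter_upwards [ae_restrict_mem measurableSet_Ioi] with x hx
    exact stmt9_F_mono_pt ha0 hab (le_of_lt hx)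
  have : γ ^ 2 * a ^ 2 ≤ γ ^ 2 * b ^ 2 := mul_le_mul_of_nonneg_left (pow_le_pow_left₀ ha0 hab 2) (sq_nonneg γ)
  linarith

lemma stmt9_zero : ψ₀ 0 = 0 := by
  rw [hψ 0]; simp

lemma stmt9_nonneg {u : ℝ} (hu : 0 ≤ u) : 0 ≤ ψ₀ u := by
  rw [← stmt9_zero hμ hψ]
  exact stmt9_mono hμ hψ (Set.mem_Ici.2 le_rfl) (Set.mem_Ici.2 hu) hu

lemma stmt9_hasDerivAt {p : ℝ} (hp : 0 < p) : DifferentiableAt ℝ ψ₀ p := by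
  have hψfun : ψ₀ = fun θ => γ ^ 2 * θ ^ 2 +
      ∫ x in Set.Ioi (0:ℝ), (Real.exp (-θ * x) - 1 + θ * x) ∂μ := funext hψ
  have hbound : ∀ᵐ x ∂(μ.restrict (Set.Ioi 0)), ∀ θ ∈ Metric.ball p p,
      ‖x - x * Real.exp (-θ * x)‖ ≤ max 1 (2 * p) * min x (x ^ 2) := by
    filter_upwards [ae_restrict_mem measurableSet_Ioi] with x hx θ hθ
    have hx0 : (0:ℝ) < x := hx
    rw [Metric.mem_ball, Real.dist_eq, abs_lt] at hθ
    have hθ0 : 0 < θ := by linarith [hθ.1]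
    have hθ2 : θ ≤ 2 * p := by linarith [hθ.2]
    have h0 : 0 ≤ θ * x := mul_nonneg hθ0.le hx0.le
    have hax : -θ * x = -(θ * x) := by ring
    have h1 : Real.exp (-(θ * x)) ≤ 1 := stmt9_exp_neg_le_one h0
    have h2 : 1 - Real.exp (-(θ * x)) ≤ θ * x := stmt9_one_sub_exp_neg_le h0
    have h3 : (0:ℝ) ≤ Real.exp (-(θ * x)) := (Real.exp_pos _).le
    rw [hax, Real.norm_eq_abs, abs_of_nonneg (by nlinarith)]
    rcases le_total x 1 with h | h
    · have hmin : min x (x ^ 2) = x ^ 2 := min_eq_right (by nlinarith)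
      rw [hmin]
      have hm : 2 * p ≤ max 1 (2 * p) := le_max_right _ _
      nlinarith [sq_nonneg x]
    · have hmin : min x (x ^ 2) = x := min_eq_left (by nlinarith)
      rw [hmin]
      have hm : (1:ℝ) ≤ max 1 (2 * p) := le_max_left _ _
      nlinarith
  have hdiff : ∀ᵐ x ∂(μ.restrict (Set.Ioi 0)), ∀ θ ∈ Metric.ball p p,
      HasDerivAt (fun θ : ℝ => Real.exp (-θ * x) - 1 + θ * x)
        (x - x * Real.exp (-θ * x)) θ := by
    refine Filter.Eventually.of_forall fun x θ _ => ?_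
    have h1 : HasDerivAt (fun θ : ℝ => -θ * x) (-x) θ := by
      simpa using ((hasDerivAt_id θ).neg.mul_const x)
    have h2 := h1.exp
    have h3 : HasDerivAt (fun θ : ℝ => θ * x) x θ := hasDerivAt_mul_const x
    have h4 := (h2.sub_const 1).add h3
    exact h4.congr_deriv (by ring)
  obtain ⟨-, hI⟩ := hasDerivAt_integral_of_dominated_loc_of_deriv_le
    (μ := μ.restrict (Set.Ioi 0)) (x₀ := p) (s := Metric.ball p p)
    (F := fun θ x => Real.exp (-θ * x) - 1 + θ * x)
    (F' := fun θ x => x - x * Real.exp (-θ * x))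
    (bound := fun x => max 1 (2 * p) * min x (x ^ 2)) (Metric.ball_mem_nhds p hp)
    (Filter.Eventually.of_forall fun θ => (stmt9_cont θ).aestronglyMeasurable)
    (stmt9_integrable hμ hp.le)
    ((by fun_prop : Continuous fun x : ℝ => x - x * Real.exp (-p * x)).aestronglyMeasurable)
    hbound (hμ.const_mul _) hdiff
  rw [hψfun]
  exact (((hasDerivAt_pow 2 p).const_mul (γ ^ 2)).add hI).differentiableAt

end psi
set_option maxHeartbeats 1600000 in
theorem stmt_9 (μ : Measure ℝ) (γ : ℝ) (hγ : 0 ≤ γ)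
    (hμ : IntegrableOn (fun x => min x (x ^ 2)) (Set.Ioi 0) μ)
    (ψ₀ : ℝ → ℝ)
    (hψ : ∀ θ, ψ₀ θ = γ ^ 2 * θ ^ 2 +
      ∫ x in Set.Ioi (0:ℝ), (Real.exp (-θ * x) - 1 + θ * x) ∂μ)
    (t lam : ℝ) (ht : 0 < t) (hlam : 0 < lam)
    (K K' : ℝ → ℝ) (hK : ContinuousOn K (Set.Icc 0 t))
    (hK' : ContinuousOn K' (Set.Icc 0 t))
    (v w : ℝ → ℝ)
    (hvmem : ∀ s ∈ Set.Icc (0:ℝ) t, v s ∈ Set.Icc 0 lam)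
    (hwmem : ∀ s ∈ Set.Icc (0:ℝ) t, w s ∈ Set.Icc 0 lam)
    (hvt : v t = lam) (hwt : w t = lam)
    (hv : ∀ s ∈ Set.Icc (0:ℝ) t,
      HasDerivWithinAt v (Real.exp (K s) * ψ₀ (v s * Real.exp (-K s)))
        (Set.Icc 0 t) s)
    (hw : ∀ s ∈ Set.Icc (0:ℝ) t,
      HasDerivWithinAt w (Real.exp (K' s) * ψ₀ (w s * Real.exp (-K' s)))
        (Set.Icc 0 t) s)
    (S C δ : ℝ)
    (hS : IsGreatest ((fun s => max (max (Real.exp (K s)) (Real.exp (-K s)))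
      (max (Real.exp (K' s)) (Real.exp (-K' s)))) '' Set.Icc 0 t) S)
    (hC : C = deriv ψ₀ (lam * S))
    (hδ : IsGreatest ((fun s => max |Real.exp (K s) - Real.exp (K' s)|
      |Real.exp (-K s) - Real.exp (-K' s)|) '' Set.Icc 0 t) δ) :
    ∀ s ∈ Set.Icc (0:ℝ) t,
      |v s - w s| ≤ t * (S * C * lam + S * ψ₀ (S * lam)) * δ * Real.exp (C * t) := by
  intro s hs
  have hconv := stmt9_convex hμ hψ
  have hmono := stmt9_mono hμ hψ
  have hψzero := stmt9_zero hμ hψ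
  have hψnn : ∀ u : ℝ, 0 ≤ u → 0 ≤ ψ₀ u := fun u hu => stmt9_nonneg hμ hψ hu
  have hS1 : 1 ≤ S := by
    obtain ⟨s₀, hs₀, hEq⟩ := hS.1
    rcases le_total 0 (K s₀) with h | h
    · calc (1:ℝ) ≤ Real.exp (K s₀) := Real.one_le_exp h
        _ ≤ max (max (Real.exp (K s₀)) (Real.exp (-K s₀)))
            (max (Real.exp (K' s₀)) (Real.exp (-K' s₀))) :=
          le_trans (le_max_left _ _) (le_max_left _ _)
        _ = S := hEq
    · calc (1:ℝ) ≤ Real.exp (-K s₀) := Real.one_le_exp (by linarith)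
        _ ≤ max (max (Real.exp (K s₀)) (Real.exp (-K s₀)))
            (max (Real.exp (K' s₀)) (Real.exp (-K' s₀))) :=
          le_trans (le_max_right _ _) (le_max_left _ _)
        _ = S := hEq
  have hS0 : 0 < S := lt_of_lt_of_le one_pos hS1
  set p : ℝ := lam * S with hpdef
  have hp : 0 < p := mul_pos hlam hS0
  have hder : HasDerivAt ψ₀ C p := by
    rw [hC]
    exact (stmt9_hasDerivAt hμ hψ hp).hasDerivAt
  have hC0 : 0 ≤ C := by
    have h1 := hconv.slope_le_of_hasDerivAt (Set.mem_Ici.2 le_rfl) (Set.mem_Ici.2 hp.le) hp hder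
    rw [slope_def_field, hψzero] at h1
    have h2 := hψnn p hp.le
    have hq : 0 ≤ (ψ₀ p - 0) / (p - 0) := div_nonneg (by linarith) (by linarith)
    linarith
  have hlip : ∀ a b : ℝ, 0 ≤ a → a ≤ b → b ≤ p → ψ₀ b - ψ₀ a ≤ C * (b - a) := by
    intro a b ha hab hbp
    rcases eq_or_lt_of_le hab with rfl | hab'
    · simp
    have hslope : slope ψ₀ a b ≤ C := by
      rcases eq_or_lt_of_le hbp with rfl | hbp'
      · exact hconv.slope_le_of_hasDerivAt (Set.mem_Ici.2 ha)
          (Set.mem_Ici.2 (ha.trans hab)) hab' hder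
      · have h1 : slope ψ₀ a b ≤ slope ψ₀ a p := by
          refine hconv.slope_mono (Set.mem_Ici.2 ha)
            ⟨Set.mem_Ici.2 (ha.trans hab), by simpa using hab'.ne'⟩
            ⟨Set.mem_Ici.2 hp.le, by simpa using (hab'.trans hbp').ne'⟩ hbp'.le
        have h2 : slope ψ₀ a p ≤ C :=
          hconv.slope_le_of_hasDerivAt (Set.mem_Ici.2 ha) (Set.mem_Ici.2 hp.le)
            (hab'.trans_le hbp) hder
        linarith
    rw [slope_def_field, div_le_iff₀ (by linarith)] at hslope
    linarith
  have hlipabs : ∀ a b : ℝ, 0 ≤ a → a ≤ p → 0 ≤ b → b ≤ p →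
      |ψ₀ a - ψ₀ b| ≤ C * |a - b| := by
    intro a b ha hap hb hbp
    rcases le_total a b with h | h
    · rw [abs_sub_comm,
        abs_of_nonneg (sub_nonneg.2 (hmono (Set.mem_Ici.2 ha) (Set.mem_Ici.2 hb) h)),
        abs_sub_comm, abs_of_nonneg (sub_nonneg.2 h)]
      exact hlip a b ha h hbp
    · rw [abs_of_nonneg (sub_nonneg.2 (hmono (Set.mem_Ici.2 hb) (Set.mem_Ici.2 ha) h)),
        abs_of_nonneg (sub_nonneg.2 h)]
      exact hlip b a hb h hap
  have hSb : ∀ r ∈ Set.Icc (0:ℝ) t, Real.exp (K r) ≤ S ∧ Real.exp (-K r) ≤ S ∧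
      Real.exp (K' r) ≤ S ∧ Real.exp (-K' r) ≤ S := by
    intro r hr
    have h := hS.2 (Set.mem_image_of_mem _ hr)
    exact ⟨le_trans (le_trans (le_max_left _ _) (le_max_left _ _)) h,
      le_trans (le_trans (le_max_right _ _) (le_max_left _ _)) h,
      le_trans (le_trans (le_max_left _ _) (le_max_right _ _)) h,
      le_trans (le_trans (le_max_right _ _) (le_max_right _ _)) h⟩
  have hδb : ∀ r ∈ Set.Icc (0:ℝ) t, |Real.exp (K r) - Real.exp (K' r)| ≤ δ ∧
      |Real.exp (-K r) - Real.exp (-K' r)| ≤ δ := by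
    intro r hr
    have h := hδ.2 (Set.mem_image_of_mem _ hr)
    exact ⟨le_trans (le_max_left _ _) h, le_trans (le_max_right _ _) h⟩
  have hδ0 : 0 ≤ δ := by
    obtain ⟨s₀, hs₀, hEq⟩ := hδ.1
    calc (0:ℝ) ≤ |Real.exp (K s₀) - Real.exp (K' s₀)| := abs_nonneg _
      _ ≤ max |Real.exp (K s₀) - Real.exp (K' s₀)| |Real.exp (-K s₀) - Real.exp (-K' s₀)| :=
        le_max_left _ _
      _ = δ := hEq
  set Δ : ℝ := (S * C * lam + S * ψ₀ (S * lam)) * δ with hΔdef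
  have hSlam : S * lam = p := by rw [hpdef]; ring
  have hψp : 0 ≤ ψ₀ p := hψnn p hp.le
  have hΔ0 : 0 ≤ Δ :=
    mul_nonneg (add_nonneg (mul_nonneg (mul_nonneg hS0.le hC0) hlam.le)
      (mul_nonneg hS0.le (hSlam ▸ hψp))) hδ0
  clear_value Δ
  have key : ∀ r ∈ Set.Icc (0:ℝ) t,
      |Real.exp (K r) * ψ₀ (v r * Real.exp (-K r)) -
        Real.exp (K' r) * ψ₀ (w r * Real.exp (-K' r))| ≤ C * |v r - w r| + Δ := by
    intro r hr
    obtain ⟨hK1, hK2, hK3, hK4⟩ := hSb r hr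
    obtain ⟨hd1, hd2⟩ := hδb r hr
    obtain ⟨hv0, hv1⟩ := hvmem r hr
    obtain ⟨hw0, hw1⟩ := hwmem r hr
    have heK : 0 < Real.exp (K r) := Real.exp_pos _
    have heK' : 0 < Real.exp (K' r) := Real.exp_pos _
    have henK : 0 < Real.exp (-K r) := Real.exp_pos _
    have henK' : 0 < Real.exp (-K' r) := Real.exp_pos _
    have hKK : Real.exp (K r) * Real.exp (-K r) = 1 := by
      rw [← Real.exp_add]; simp
    set a := v r * Real.exp (-K r) with hadef
    set b := w r * Real.exp (-K r) with hbdef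
    set c := w r * Real.exp (-K' r) with hcdef
    have ha0 : 0 ≤ a := mul_nonneg hv0 henK.le
    have hb0 : 0 ≤ b := mul_nonneg hw0 henK.le
    have hc0 : 0 ≤ c := mul_nonneg hw0 henK'.le
    have hap : a ≤ p := mul_le_mul hv1 hK2 henK.le hlam.le
    have hbp : b ≤ p := mul_le_mul hw1 hK2 henK.le hlam.le
    have hcp : c ≤ p := mul_le_mul hw1 hK4 henK'.le hlam.le
    have e1 : |ψ₀ a - ψ₀ b| ≤ C * |a - b| := hlipabs a b ha0 hap hb0 hbp
    have e2 : |ψ₀ b - ψ₀ c| ≤ C * |b - c| := hlipabs b c hb0 hbp hc0 hcp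
    have hab : |a - b| = |v r - w r| * Real.exp (-K r) := by
      rw [hadef, hbdef, ← sub_mul, abs_mul, abs_of_pos henK]
    have hbc : |b - c| = w r * |Real.exp (-K r) - Real.exp (-K' r)| := by
      rw [hbdef, hcdef, ← mul_sub, abs_mul, abs_of_nonneg hw0]
    have hψb : ψ₀ b ≤ ψ₀ p := hmono (Set.mem_Ici.2 hb0) (Set.mem_Ici.2 hp.le) hbp
    have hψbnn : 0 ≤ ψ₀ b := hψnn _ hb0
    have decomp : Real.exp (K r) * ψ₀ a - Real.exp (K' r) * ψ₀ c =
        Real.exp (K r) * (ψ₀ a - ψ₀ b) + (Real.exp (K r) - Real.exp (K' r)) * ψ₀ b +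
          Real.exp (K' r) * (ψ₀ b - ψ₀ c) := by ring
    rw [decomp]
    have T1 : |Real.exp (K r) * (ψ₀ a - ψ₀ b)| ≤ C * |v r - w r| := by
      rw [abs_mul, abs_of_pos heK]
      calc Real.exp (K r) * |ψ₀ a - ψ₀ b|
          ≤ Real.exp (K r) * (C * (|v r - w r| * Real.exp (-K r))) := by
            apply mul_le_mul_of_nonneg_left _ heK.le
            rw [← hab]; exact e1
        _ = C * |v r - w r| * (Real.exp (K r) * Real.exp (-K r)) := by ring
        _ = C * |v r - w r| := by rw [hKK, mul_one]
    have T2 : |(Real.exp (K r) - Real.exp (K' r)) * ψ₀ b| ≤ δ * (S * ψ₀ (S * lam)) := by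
      rw [abs_mul, abs_of_nonneg hψbnn]
      calc |Real.exp (K r) - Real.exp (K' r)| * ψ₀ b ≤ δ * ψ₀ p :=
            mul_le_mul hd1 hψb hψbnn hδ0
        _ ≤ δ * (S * ψ₀ p) := mul_le_mul_of_nonneg_left (le_mul_of_one_le_left hψp hS1) hδ0
        _ = δ * (S * ψ₀ (S * lam)) := by rw [hSlam]
    have T3 : |Real.exp (K' r) * (ψ₀ b - ψ₀ c)| ≤ δ * (S * C * lam) := by
      rw [abs_mul, abs_of_pos heK']
      have h1 : |ψ₀ b - ψ₀ c| ≤ C * (w r * |Real.exp (-K r) - Real.exp (-K' r)|) := by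
        rw [← hbc]; exact e2
      have h2 : C * (w r * |Real.exp (-K r) - Real.exp (-K' r)|) ≤ C * (lam * δ) :=
        mul_le_mul_of_nonneg_left (mul_le_mul hw1 hd2 (abs_nonneg _) hlam.le) hC0
      calc Real.exp (K' r) * |ψ₀ b - ψ₀ c| ≤ S * (C * (lam * δ)) :=
            mul_le_mul hK3 (h1.trans h2) (abs_nonneg _) hS0.le
        _ = δ * (S * C * lam) := by ring
    have habs : |Real.exp (K r) * (ψ₀ a - ψ₀ b) + (Real.exp (K r) - Real.exp (K' r)) * ψ₀ b +
        Real.exp (K' r) * (ψ₀ b - ψ₀ c)| ≤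
        |Real.exp (K r) * (ψ₀ a - ψ₀ b)| + |(Real.exp (K r) - Real.exp (K' r)) * ψ₀ b| +
          |Real.exp (K' r) * (ψ₀ b - ψ₀ c)| := by
      exact (abs_add_le _ _).trans (add_le_add_left (abs_add_le _ _) _)
    have hsum : δ * (S * ψ₀ (S * lam)) + δ * (S * C * lam) = Δ := by rw [hΔdef]; ring
    linarith
  have hvc : ContinuousOn v (Set.Icc 0 t) := fun r hr => (hv r hr).continuousWithinAt
  have hwc : ContinuousOn w (Set.Icc 0 t) := fun r hr => (hw r hr).continuousWithinAt
  have hmap : Set.MapsTo (fun r : ℝ => t - r) (Set.Icc 0 t) (Set.Icc 0 t) := by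
    intro r hr
    simp only [Set.mem_Icc] at hr ⊢
    constructor <;> linarith [hr.1, hr.2]
  have hgc : ContinuousOn (fun r => v (t - r) - w (t - r)) (Set.Icc 0 t) := by
    have h1 := hvc.comp ((continuous_const.sub continuous_id).continuousOn) hmap
    have h2 := hwc.comp ((continuous_const.sub continuous_id).continuousOn) hmap
    exact h1.sub h2
  have hg' : ∀ r ∈ Set.Ico (0:ℝ) t, HasDerivWithinAt (fun r => v (t - r) - w (t - r))
      (-(Real.exp (K (t - r)) * ψ₀ (v (t - r) * Real.exp (-K (t - r))) -
         Real.exp (K' (t - r)) * ψ₀ (w (t - r) * Real.exp (-K' (t - r))))) (Set.Ici r) r := by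
    intro r hr
    have hrt : t - r ∈ Set.Icc (0:ℝ) t := ⟨by linarith [hr.2], by linarith [hr.1]⟩
    have hsub : HasDerivWithinAt (fun r : ℝ => t - r) (-1) (Set.Icc 0 t) r :=
      (hasDerivWithinAt_id r _).const_sub t
    have h1 := HasDerivWithinAt.comp r (hv _ hrt) hsub hmap
    have h2 := HasDerivWithinAt.comp r (hw _ hrt) hsub hmap
    have h3 := h1.sub h2
    simp only [Function.comp_def] at h3
    have h4 : Set.Icc (0:ℝ) t ∈ nhdsWithin r (Set.Ici r) :=
      Filter.mem_of_superset (Icc_mem_nhdsGE_of_mem ⟨le_rfl, hr.2⟩)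
        (Set.Icc_subset_Icc hr.1 le_rfl)
    have h5 := h3.mono_of_mem_nhdsWithin h4
    exact h5.congr_deriv (by ring)
  have hg0 : ‖v (t - 0) - w (t - 0)‖ ≤ 0 := by simp [hvt, hwt]
  have hgb : ∀ r ∈ Set.Ico (0:ℝ) t,
      ‖-(Real.exp (K (t - r)) * ψ₀ (v (t - r) * Real.exp (-K (t - r))) -
         Real.exp (K' (t - r)) * ψ₀ (w (t - r) * Real.exp (-K' (t - r))))‖ ≤
        C * ‖v (t - r) - w (t - r)‖ + Δ := by
    intro r hr
    have hrt : t - r ∈ Set.Icc (0:ℝ) t := ⟨by linarith [hr.2], by linarith [hr.1]⟩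
    rw [norm_neg, Real.norm_eq_abs, Real.norm_eq_abs]
    exact key _ hrt
  have hgr := norm_le_gronwallBound_of_norm_deriv_right_le hgc hg' hg0 hgb
  have hts : t - s ∈ Set.Icc (0:ℝ) t := ⟨by linarith [hs.2], by linarith [hs.1]⟩
  have h := hgr (t - s) hts
  rw [show t - (t - s) = s by ring, Real.norm_eq_abs] at h
  have hfinal : gronwallBound 0 C Δ (t - s - 0) ≤ t * Δ * Real.exp (C * t) := by
    set x := t - s - 0 with hxdef
    have hx0 : 0 ≤ x := by rw [hxdef]; linarith [hs.2]
    have hxt : x ≤ t := by rw [hxdef]; linarith [hs.1]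
    clear_value x
    by_cases hCz : C = 0
    · subst hCz
      rw [gronwallBound_K0]
      simp only [zero_mul, Real.exp_zero, mul_one, zero_add]
      nlinarith [mul_le_mul_of_nonneg_left hxt hΔ0]
    · have hCpos : 0 < C := hC0.lt_of_ne (Ne.symm hCz)
      rw [gronwallBound_of_K_ne_0 hCz]
      simp only [zero_mul, zero_add]
      have hE : Real.exp (C * x) * Real.exp (-(C * x)) = 1 := by rw [← Real.exp_add]; simp
      have h1 : Real.exp (C * x) - 1 ≤ C * x * Real.exp (C * x) := by
        nlinarith [mul_le_mul_of_nonneg_left (Real.add_one_le_exp (-(C * x)))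
          (Real.exp_pos (C * x)).le, hE]
      have h2 : Δ / C * (Real.exp (C * x) - 1) ≤ Δ / C * (C * x * Real.exp (C * x)) :=
        mul_le_mul_of_nonneg_left h1 (div_nonneg hΔ0 hC0)
      have h3 : Δ / C * (C * x * Real.exp (C * x)) = Δ * x * Real.exp (C * x) := by
        field_simp
      have h4 : Δ * x * Real.exp (C * x) ≤ Δ * t * Real.exp (C * t) := by
        have hee : Real.exp (C * x) ≤ Real.exp (C * t) :=
          Real.exp_le_exp.2 (mul_le_mul_of_nonneg_left hxt hC0)
        exact mul_le_mul (mul_le_mul_of_nonneg_left hxt hΔ0) hee (Real.exp_pos _).le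
          (mul_nonneg hΔ0 ht.le)
      linarith
  calc |v s - w s| ≤ gronwallBound 0 C Δ (t - s - 0) := h
    _ ≤ t * Δ * Real.exp (C * t) := hfinal
    _ = t * (S * C * lam + S * ψ₀ (S * lam)) * δ * Real.exp (C * t) := by rw [hΔdef]; ring
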